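/- Let s be a binary string of length n such that wt(s_1^j) ≠ wt(s_{n-j+1}^n) for all 1 ≤ j ≤ n-1. Then s is uniquely reconstructible up to reversal from its prefix-suffix composition multiset. -/

import Mathlib

/-- The composition of a binary string: (length, number of ones). -/
def comp (t : List Bool) : ℕ × ℕ := (t.length, t.count true)

/-- The prefix-suffix composition multiset of a binary string. -/
def psM (s : List Bool) : Multiset (ℕ × ℕ) :=
  ((List.range s.length).map (fun j => comp (s.take (j + 1))) : Multiset (ℕ × ℕ))
  + ((List.range s.length).map (fun i => comp (s.drop i)) : Multiset (ℕ × ℕ))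

namespace PSMaux

lemma split (s : List Bool) (k : ℕ) :
    (s.take k).count true + (s.drop k).count true = s.count true := by
  rw [← List.count_append, List.take_append_drop]

lemma P_step (s : List Bool) (j : ℕ) :
    (s.take j).count true ≤ (s.take (j+1)).count true ∧
      (s.take (j+1)).count true ≤ (s.take j).count true + 1 := by
  rw [List.take_succ, List.count_append]
  rcases h : s[j]? with _ | b
  · simp
  · rcases b <;> simp

lemma range_filter_eq (n : ℕ) : ∀ k, k < n →
    (List.range n).filter (fun i => decide (i = k)) = [k] := by
  induction n with
  | zero => intro k hk; omega
  | succ m ih =>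
    intro k hk
    rw [List.range_succ, List.filter_append]
    rcases Nat.lt_or_ge k m with h' | h'
    · rw [ih k h']
      have hne : ¬ (m = k) := by omega
      simp [hne]
    · have hkm : k = m := by omega
      subst hkm
      have hnil : (List.range k).filter (fun i => decide (i = k)) = [] := by
        apply List.filter_eq_nil_iff.2
        intro a ha
        simp only [List.mem_range] at ha
        simp; omega
      simp [hnil]

lemma card_psM (s : List Bool) : (psM s).card = 2 * s.length := by
  simp [psM]; ring

lemma psM_filter (s : List Bool) (j : ℕ) (h1 : 1 ≤ j) (h2 : j ≤ s.length) :
    (psM s).filter (fun x => x.1 = j) =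
      {(j, (s.take j).count true), (j, (s.drop (s.length - j)).count true)} := by
  rw [psM, Multiset.filter_add, Multiset.filter_coe, Multiset.filter_coe,
    List.filter_map, List.filter_map]
  have e1 : (List.range s.length).filter
      ((fun x => decide (x.1 = j)) ∘ (fun i => comp (s.take (i + 1)))) = [j - 1] := by
    have hc : ∀ i ∈ List.range s.length,
        ((fun x => decide (x.1 = j)) ∘ (fun i => comp (s.take (i + 1)))) i
          = (fun i => decide (i = j - 1)) i := by
      intro i hi
      simp only [List.mem_range] at hi
      simp only [Function.comp, comp, List.length_take]
      have hmin : min (i + 1) s.length = i + 1 := by omega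
      rw [hmin]
      simp only [decide_eq_decide]
      omega
    rw [List.filter_congr hc]
    exact range_filter_eq _ _ (by omega)
  have e2 : (List.range s.length).filter
      ((fun x => decide (x.1 = j)) ∘ (fun i => comp (s.drop i))) = [s.length - j] := by
    have hc : ∀ i ∈ List.range s.length,
        ((fun x => decide (x.1 = j)) ∘ (fun i => comp (s.drop i))) i
          = (fun i => decide (i = s.length - j)) i := by
      intro i hi
      simp only [List.mem_range] at hi
      simp only [Function.comp, comp, List.length_drop]
      simp only [decide_eq_decide]
      omega
    rw [List.filter_congr hc]
    exact range_filter_eq _ _ (by omega)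
  rw [e1, e2]
  have hj1 : j - 1 + 1 = j := by omega
  have hj2 : s.length - (s.length - j) = j := by omega
  simp only [List.map_cons, List.map_nil, comp, hj1, List.length_take, List.length_drop, hj2,
    min_eq_left h2]
  rfl

lemma pair_cases {a b c d : ℕ × ℕ} (h : ({a, b} : Multiset (ℕ × ℕ)) = {c, d}) :
    (a = c ∧ b = d) ∨ (a = d ∧ b = c) := by
  have ha : a = c ∨ a = d := by
    have : a ∈ ({c, d} : Multiset (ℕ × ℕ)) := by rw [← h]; simp
    simpa using this
  rcases ha with rfl | rfl
  · left
    refine ⟨rfl, ?_⟩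
    have h' : (a ::ₘ ({b} : Multiset (ℕ × ℕ))) = a ::ₘ {d} := by
      simpa [Multiset.insert_eq_cons] using h
    simpa using (Multiset.cons_inj_right a).1 h'
  · right
    refine ⟨rfl, ?_⟩
    have h2 : ({a, b} : Multiset (ℕ × ℕ)) = {a, c} := by
      rw [h, Multiset.pair_comm]
    have h' : (a ::ₘ ({b} : Multiset (ℕ × ℕ))) = a ::ₘ {c} := by
      simpa [Multiset.insert_eq_cons] using h2
    simpa using (Multiset.cons_inj_right a).1 h'

lemma eq_of_prefix_counts (s t : List Bool) (hl : t.length = s.length)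
    (hc : ∀ j, (t.take j).count true = (s.take j).count true) : t = s := by
  apply List.ext_getElem hl
  intro i h1 h2
  have e1 := hc i
  have e2 := hc (i + 1)
  rw [List.take_succ, List.take_succ, List.count_append, List.count_append,
    List.getElem?_eq_getElem h1, List.getElem?_eq_getElem h2] at e2
  rcases ht : t[i] <;> rcases hs : s[i] <;> rw [ht, hs] at e2 <;> simp at e2 ⊢ <;> omega

end PSMaux

open PSMaux in
theorem unique_of_all_prefix_suffix_weights_distinct (n : ℕ) (s : List Bool) (hs : s.length = n)
    (h : ∀ j, 1 ≤ j → j ≤ n - 1 →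
      (s.take j).count true ≠ (s.drop (n - j)).count true) :
    ∀ t : List Bool, psM t = psM s → t = s ∨ t = s.reverse := by
  intro t hM
  subst hs
  set n := s.length with hn
  have hlen : t.length = n := by
    have := congrArg Multiset.card hM
    rw [card_psM, card_psM] at this
    omega
  -- handle n = 0
  rcases Nat.eq_zero_or_pos n with h0 | hpos
  · have hs0 : s = [] := List.length_eq_zero_iff.mp (by omega)
    have ht0 : t = [] := List.length_eq_zero_iff.mp (by omega)
    left; rw [hs0, ht0]
  -- the key pairing fact
  have key : ∀ j, 1 ≤ j → j ≤ n →
      ((t.take j).count true = (s.take j).count true ∧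
        (t.drop (n - j)).count true = (s.drop (n - j)).count true) ∨
      ((t.take j).count true = (s.drop (n - j)).count true ∧
        (t.drop (n - j)).count true = (s.take j).count true) := by
    intro j hj1 hj2
    have h1 := psM_filter t j hj1 (by omega)
    have h2 := psM_filter s j hj1 hj2
    rw [hM, h2, hlen] at h1
    rcases pair_cases h1.symm with ⟨ha, hb⟩ | ⟨ha, hb⟩
    · left; exact ⟨congrArg Prod.snd ha, congrArg Prod.snd hb⟩
    · right; exact ⟨congrArg Prod.snd ha, congrArg Prod.snd hb⟩
  -- the branch consistency
  have main : ∀ j, 1 ≤ j → j ≤ n →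
      ((∀ i, 1 ≤ i → i ≤ j → (t.take i).count true = (s.take i).count true ∧
          (t.drop (n - i)).count true = (s.drop (n - i)).count true) ∨
       (∀ i, 1 ≤ i → i ≤ j → (t.take i).count true = (s.drop (n - i)).count true ∧
          (t.drop (n - i)).count true = (s.take i).count true)) := by
    intro j hj1 hj2
    induction j with
    | zero => omega
    | succ m ih =>
      rcases Nat.eq_zero_or_pos m with hm0 | hmpos
      · subst hm0
        rcases key 1 le_rfl hj2 with hk | hk
        · left; intro i hi1 hi2
          have : i = 1 := by omega
          subst this; exact hk
        · right; intro i hi1 hi2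
          have : i = 1 := by omega
          subst this; exact hk
      · have hm2 : m ≤ n := by omega
        -- facts for the step
        have stepSs := P_step s m
        have stepSt := P_step t m
        have hnm : n - m = (n - (m + 1)) + 1 := by omega
        have stepDs := P_step s (n - (m + 1))
        have stepDt := P_step t (n - (m + 1))
        have spl1 := split s (n - m)
        have spl2 := split s (n - (m + 1))
        have spl3 := split t (n - m)
        have spl4 := split t (n - (m + 1))
        rw [← hnm] at stepDs stepDt
        rcases ih hmpos hm2 with ihL | ihR
        · left
          intro i hi1 hi2
          rcases Nat.lt_or_ge i (m + 1) with hi | hi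
          · exact ihL i hi1 (by omega)
          · have hieq : i = m + 1 := by omega
            subst hieq
            rcases key (m + 1) (by omega) hj2 with hk | hk
            · exact hk
            · -- contradiction or j+1 = n
              rcases Nat.lt_or_ge (m + 1) n with hlt | hge
              · exfalso
                have hm' := h m hmpos (by omega)
                have hm1' := h (m + 1) (by omega) (by omega)
                have b1 := (ihL m hmpos le_rfl).1
                have b2 := (ihL m hmpos le_rfl).2
                omega
              · have hmn : m + 1 = n := by omega
                obtain ⟨hk1, hk2⟩ := hk
                have e1 : (s.take (m+1)).count true = s.count true := by
                  rw [hmn, hn, List.take_length]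
                have e2 : (t.take (m+1)).count true = t.count true := by
                  rw [hmn, ← hlen, List.take_length]
                have e3 : (s.drop (n - (m+1))).count true = s.count true := by
                  rw [hmn, Nat.sub_self, List.drop_zero]
                have e4 : (t.drop (n - (m+1))).count true = t.count true := by
                  rw [hmn, Nat.sub_self, List.drop_zero]
                exact ⟨by omega, by omega⟩
        · right
          intro i hi1 hi2
          rcases Nat.lt_or_ge i (m + 1) with hi | hi
          · exact ihR i hi1 (by omega)
          · have hieq : i = m + 1 := by omega
            subst hieq
            rcases key (m + 1) (by omega) hj2 with hk | hk
            · rcases Nat.lt_or_ge (m + 1) n with hlt | hge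
              · exfalso
                have hm' := h m hmpos (by omega)
                have hm1' := h (m + 1) (by omega) (by omega)
                have b1 := (ihR m hmpos le_rfl).1
                have b2 := (ihR m hmpos le_rfl).2
                omega
              · have hmn : m + 1 = n := by omega
                obtain ⟨hk1, hk2⟩ := hk
                have e1 : (s.take (m+1)).count true = s.count true := by
                  rw [hmn, hn, List.take_length]
                have e2 : (t.take (m+1)).count true = t.count true := by
                  rw [hmn, ← hlen, List.take_length]
                have e3 : (s.drop (n - (m+1))).count true = s.count true := by
                  rw [hmn, Nat.sub_self, List.drop_zero]
                have e4 : (t.drop (n - (m+1))).count true = t.count true := by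
                  rw [hmn, Nat.sub_self, List.drop_zero]
                exact ⟨by omega, by omega⟩
            · exact hk
  rcases main n hpos le_rfl with hL | hR
  · left
    apply eq_of_prefix_counts s t hlen
    intro j
    rcases Nat.eq_zero_or_pos j with rfl | hj1
    · simp
    rcases Nat.lt_or_ge n j with hj | hj
    · rw [List.take_of_length_le (by omega), List.take_of_length_le (by omega)]
      have := (hL n hpos le_rfl).1
      rwa [List.take_length, ← hlen, List.take_length] at this
    · exact (hL j hj1 hj).1
  · right
    apply eq_of_prefix_counts s.reverse t (by simp [hlen]; exact hn)
    intro j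
    have hrev : ∀ k, k ≤ n → (s.reverse.take k).count true = (s.drop (n - k)).count true := by
      intro k hk
      have e1 := split s.reverse k
      have e2 : s.reverse.drop k = (s.take (n - k)).reverse := by
        rw [List.reverse_take]
        congr 1
        omega
      rw [e2, List.count_reverse, List.count_reverse] at e1
      have e3 := split s (n - k)
      have e4 : s.drop (s.length - (n - k)) = s.drop k := by
        congr 1; omega
      omega
    rcases Nat.eq_zero_or_pos j with rfl | hj1
    · simp
    rcases Nat.lt_or_ge n j with hj | hj
    · rw [List.take_of_length_le (show t.length ≤ j by omega),
        List.take_of_length_le (show s.reverse.length ≤ j by rw [List.length_reverse]; omega),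
        List.count_reverse]
      have := (hR n hpos le_rfl).1
      rw [Nat.sub_self, List.drop_zero] at this
      rw [← hlen, List.take_length] at this
      exact this
    · rw [hrev j hj]
      exact (hR j hj1 hj).1
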